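/- For the Curie–Weiss model, the free entropy density converges: lim_{n→∞} (1/n) log Z_n(β,h) = max_{μ ∈ [−1,1]} { hμ + (β/2)μ² + H( (1+μ)/2 ) }, where Z_n(β,h) = ∑_{x ∈ {−1,1}^n} exp( (β/(2n)) (∑_{i=1}^n x_i)² + h ∑_{i=1}^n x_i ) and H(t) = −t log t − (1−t) log(1−t) is the binary entropy function (with H(0) = H(1) = 0). -/

import Mathlib

open Filter Real

/-- The spin value `±1` associated to a Boolean. -/
noncomputable def spin (b : Bool) : ℝ := if b then 1 else -1

/-- Partition function of the Curie–Weiss (Complete graph) Ising model: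
`Z_n(β,h) = ∑_{x ∈ {-1,1}^n} exp((β/(2n)) (∑_{i=1}^n x_i)² + h ∑_{i=1}^n x_i)`. -/
noncomputable def cwZ (β h : ℝ) (n : ℕ) : ℝ :=
  ∑ σ : Fin n → Bool,
    Real.exp (β / (2 * n) * (∑ i, spin (σ i)) ^ 2 + h * ∑ i, spin (σ i))

/-- The binary entropy function `H(t) = -t log t - (1-t) log (1-t)` (with the convention
`H(0) = H(1) = 0`, automatic since `Real.log 0 = 0`). -/
noncomputable def binH (t : ℝ) : ℝ := -(t * Real.log t) - (1 - t) * Real.log (1 - t)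

open Finset


lemma sum_spin_finset (n : ℕ) (s : Finset (Fin n)) :
    ∑ i, spin (decide (i ∈ s)) = 2 * (s.card : ℝ) - n := by
  have : ∀ i, spin (decide (i ∈ s)) = (if i ∈ s then (2:ℝ) else 0) - 1 := by
    intro i; by_cases hi : i ∈ s <;> simp [spin, hi] <;> norm_num
  rw [Finset.sum_congr rfl (fun i _ => this i), Finset.sum_sub_distrib,
    Finset.sum_ite_mem, Finset.univ_inter, Finset.sum_const, Finset.sum_const]
  simp [mul_comm]

lemma cwZ_eq (β h : ℝ) (n : ℕ) :
    cwZ β h n = ∑ k ∈ range (n+1), (n.choose k : ℝ) *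
      Real.exp (β / (2 * n) * (2*(k:ℝ) - n) ^ 2 + h * (2*(k:ℝ) - n)) := by
  unfold cwZ
  have key := Fintype.sum_equiv
    (⟨fun s i => decide (i ∈ s), fun σ => Finset.univ.filter (fun i => σ i = true),
      by intro s; ext i; simp, by intro σ; funext i; simp⟩ : Finset (Fin n) ≃ (Fin n → Bool))
    (fun s : Finset (Fin n) => Real.exp (β / (2 * n) * (2*(s.card:ℝ) - n) ^ 2 + h * (2*(s.card:ℝ) - n)))
    (fun σ : Fin n → Bool => Real.exp (β / (2 * n) * (∑ i, spin (σ i)) ^ 2 + h * ∑ i, spin (σ i)))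
    (fun s => by simp only [Equiv.coe_fn_mk]; rw [sum_spin_finset])
  rw [← key, ← Finset.powerset_univ, Finset.sum_powerset]
  simp only [Finset.card_univ, Fintype.card_fin]
  refine Finset.sum_congr rfl (fun k hk => ?_)
  rw [Finset.sum_congr rfl (fun s hs => by rw [(Finset.mem_powersetCard.mp hs).2]),
    Finset.sum_const, Finset.card_powersetCard, Finset.card_univ, Fintype.card_fin, nsmul_eq_mul]


noncomputable def tt (n k j : ℕ) : ℝ :=
  (n.choose j : ℝ) * ((k:ℝ)/n)^j * (((n:ℝ)-(k:ℝ))/n)^(n-j)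

lemma choose_cast_ineq1 {n k j : ℕ} (hk : k ≤ n) (hj : j < k) :
    (n.choose j) * (n - k) ≤ (n.choose (j+1)) * k := by
  apply Nat.le_of_mul_le_mul_right _ (Nat.succ_pos j)
  calc n.choose j * (n - k) * (j+1) = n.choose j * ((n-k)*(j+1)) := by ring
    _ ≤ n.choose j * ((n-j)*k) :=
        Nat.mul_le_mul_left _ (Nat.mul_le_mul (by omega) (by omega))
    _ = n.choose j * (n-j) * k := by ring
    _ = n.choose (j+1) * (j+1) * k := by rw [← Nat.choose_succ_right_eq]
    _ = n.choose (j+1) * k * (j+1) := by ring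

lemma choose_cast_ineq2 {n k j : ℕ} (hk : k ≤ j) (hj : j < n) :
    (n.choose (j+1)) * k ≤ (n.choose j) * (n - k) := by
  apply Nat.le_of_mul_le_mul_right _ (Nat.succ_pos j)
  calc n.choose (j+1) * k * (j+1) = n.choose (j+1) * (j+1) * k := by ring
    _ = n.choose j * (n-j) * k := by rw [Nat.choose_succ_right_eq]
    _ = n.choose j * ((n-j)*k) := by ring
    _ ≤ n.choose j * ((n-k)*(j+1)) :=
        Nat.mul_le_mul_left _ (Nat.mul_le_mul (by omega) (by omega))
    _ = n.choose j * (n-k) * (j+1) := by ring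

lemma tt_mono1 {n k j : ℕ} (hn : 0 < n) (hk : k ≤ n) (hj : j < k) :
    tt n k j ≤ tt n k (j+1) := by
  have hjn : j < n := lt_of_lt_of_le hj hk
  have hn' : (0:ℝ) < n := by exact_mod_cast hn
  have hr : (n.choose j : ℝ) * ((n:ℝ)-k) ≤ (n.choose (j+1):ℝ) * k := by
    have := (Nat.cast_le (α := ℝ)).mpr (choose_cast_ineq1 hk hj)
    push_cast [Nat.cast_sub hk] at this
    linarith
  have key2 : (n.choose j : ℝ) * (((n:ℝ)-k)/n) ≤ (n.choose (j+1):ℝ) * ((k:ℝ)/n) := by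
    rw [mul_div_assoc', mul_div_assoc']
    exact div_le_div_of_nonneg_right hr hn'.le
  have hp : (0:ℝ) ≤ (k:ℝ)/n := by positivity
  have hq : (0:ℝ) ≤ ((n:ℝ)-(k:ℝ))/n := by
    apply div_nonneg _ (le_of_lt hn')
    have : (k:ℝ) ≤ n := by exact_mod_cast hk
    linarith
  have hnj : n - j = (n - j - 1) + 1 := by omega
  have hnj2 : n - (j+1) = n - j - 1 := by omega
  unfold tt
  rw [hnj, hnj2, pow_succ, pow_succ]
  calc (n.choose j:ℝ) * ((k:ℝ)/n)^j * ((((n:ℝ)-k)/n)^(n-j-1) * (((n:ℝ)-k)/n))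
      = ((n.choose j:ℝ) * (((n:ℝ)-k)/n)) * (((k:ℝ)/n)^j * (((n:ℝ)-k)/n)^(n-j-1)) := by ring
    _ ≤ ((n.choose (j+1):ℝ) * ((k:ℝ)/n)) * (((k:ℝ)/n)^j * (((n:ℝ)-k)/n)^(n-j-1)) := by
        apply mul_le_mul_of_nonneg_right key2; positivity
    _ = (n.choose (j+1):ℝ) * (((k:ℝ)/n)^j * ((k:ℝ)/n)) * (((n:ℝ)-k)/n)^(n-j-1) := by ring

lemma tt_mono2 {n k j : ℕ} (hn : 0 < n) (hk : k ≤ n) (hkj : k ≤ j) (hj : j < n) :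
    tt n k (j+1) ≤ tt n k j := by
  have hn' : (0:ℝ) < n := by exact_mod_cast hn
  have hr : (n.choose (j+1):ℝ) * k ≤ (n.choose j : ℝ) * ((n:ℝ)-k) := by
    have := (Nat.cast_le (α := ℝ)).mpr (choose_cast_ineq2 hkj hj)
    push_cast [Nat.cast_sub hk] at this
    linarith
  have key2 : (n.choose (j+1):ℝ) * ((k:ℝ)/n) ≤ (n.choose j : ℝ) * (((n:ℝ)-k)/n) := by
    rw [mul_div_assoc', mul_div_assoc']
    exact div_le_div_of_nonneg_right hr hn'.le
  have hq : (0:ℝ) ≤ ((n:ℝ)-(k:ℝ))/n := by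
    apply div_nonneg _ (le_of_lt hn')
    have : (k:ℝ) ≤ n := by exact_mod_cast hk
    linarith
  have hnj : n - j = (n - j - 1) + 1 := by omega
  have hnj2 : n - (j+1) = n - j - 1 := by omega
  unfold tt
  rw [hnj, hnj2, pow_succ, pow_succ]
  calc (n.choose (j+1):ℝ) * (((k:ℝ)/n)^j * ((k:ℝ)/n)) * (((n:ℝ)-k)/n)^(n-j-1)
      = ((n.choose (j+1):ℝ) * ((k:ℝ)/n)) * (((k:ℝ)/n)^j * (((n:ℝ)-k)/n)^(n-j-1)) := by ring
    _ ≤ ((n.choose j:ℝ) * (((n:ℝ)-k)/n)) * (((k:ℝ)/n)^j * (((n:ℝ)-k)/n)^(n-j-1)) := by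
        apply mul_le_mul_of_nonneg_right key2; positivity
    _ = (n.choose j:ℝ) * ((k:ℝ)/n)^j * ((((n:ℝ)-k)/n)^(n-j-1) * (((n:ℝ)-k)/n)) := by ring

lemma tt_le_max {n k : ℕ} (hn : 0 < n) (hk : k ≤ n) :
    ∀ j ≤ n, tt n k j ≤ tt n k k := by
  have left : ∀ d, d ≤ k → tt n k (k - d) ≤ tt n k k := by
    intro d
    induction d with
    | zero => simp
    | succ d ih =>
      intro hd
      have h1 : k - (d+1) < k := by omega
      have h2 : k - (d+1) + 1 = k - d := by omega
      calc tt n k (k - (d+1)) ≤ tt n k (k - (d+1) + 1) := tt_mono1 hn hk h1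
        _ = tt n k (k - d) := by rw [h2]
        _ ≤ tt n k k := ih (by omega)
  have right : ∀ d, k + d ≤ n → tt n k (k + d) ≤ tt n k k := by
    intro d
    induction d with
    | zero => simp
    | succ d ih =>
      intro hd
      have : k + (d+1) = (k+d) + 1 := by omega
      rw [this]
      calc tt n k ((k+d)+1) ≤ tt n k (k+d) := tt_mono2 hn hk (by omega) (by omega)
        _ ≤ tt n k k := ih (by omega)
  intro j hj
  rcases le_or_gt j k with hjk | hjk
  · have : j = k - (k - j) := by omega
    rw [this]; exact left _ (by omega)
  · have : j = k + (j - k) := by omega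
    rw [this]; exact right _ (by omega)

lemma sum_tt {n k : ℕ} (hn : 0 < n) (hk : k ≤ n) :
    ∑ j ∈ range (n+1), tt n k j = 1 := by
  have hn' : (n:ℝ) ≠ 0 := by positivity
  have hpq : (k:ℝ)/n + ((n:ℝ)-k)/n = 1 := by field_simp; ring
  calc ∑ j ∈ range (n+1), tt n k j
      = ∑ j ∈ range (n+1), ((k:ℝ)/n)^j * (((n:ℝ)-k)/n)^(n-j) * (n.choose j : ℝ) := by
        refine Finset.sum_congr rfl (fun j _ => ?_); unfold tt; ring
    _ = ((k:ℝ)/n + ((n:ℝ)-k)/n)^n := (add_pow _ _ n).symm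
    _ = 1 := by rw [hpq, one_pow]

lemma tt_nonneg {n k : ℕ} (hn : 0 < n) (hk : k ≤ n) (j : ℕ) : 0 ≤ tt n k j := by
  have hn' : (0:ℝ) < n := by exact_mod_cast hn
  have hq : (0:ℝ) ≤ ((n:ℝ)-(k:ℝ))/n := by
    apply div_nonneg _ (le_of_lt hn')
    have : (k:ℝ) ≤ n := by exact_mod_cast hk
    linarith
  unfold tt; positivity

lemma tt_le_one {n k : ℕ} (hn : 0 < n) (hk : k ≤ n) : tt n k k ≤ 1 := by
  rw [← sum_tt hn hk]
  exact Finset.single_le_sum (fun j _ => tt_nonneg hn hk j)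
    (Finset.mem_range.mpr (by omega))

lemma one_le_tt {n k : ℕ} (hn : 0 < n) (hk : k ≤ n) : 1 ≤ (n+1 : ℝ) * tt n k k := by
  have := sum_tt hn hk
  have h2 : ∑ j ∈ range (n+1), tt n k j ≤ ∑ _j ∈ range (n+1), tt n k k :=
    Finset.sum_le_sum (fun j hj => tt_le_max hn hk j (by simpa using Nat.lt_succ_iff.mp (Finset.mem_range.mp hj)))
  rw [this] at h2
  rwa [Finset.sum_const, Finset.card_range, nsmul_eq_mul, Nat.cast_add, Nat.cast_one] at h2


lemma aux_pow (x : ℝ) (m : ℕ) (hx : 0 < x ∨ m = 0) :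
    Real.exp ((m:ℝ) * (-Real.log x)) * x^m = 1 := by
  rcases hx with hx | rfl
  · rw [Real.exp_nat_mul, Real.exp_neg, Real.exp_log hx, ← mul_pow,
      inv_mul_cancel₀ (ne_of_gt hx), one_pow]
  · simp

lemma exp_binH {n k : ℕ} (hn : 0 < n) (hk : k ≤ n) :
    Real.exp ((n:ℝ) * binH ((k:ℝ)/n)) * (((k:ℝ)/n)^k * (((n:ℝ)-(k:ℝ))/n)^(n-k)) = 1 := by
  have hn' : (0:ℝ) < n := by exact_mod_cast hn
  have hk' : (k:ℝ) ≤ n := by exact_mod_cast hk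
  have h1 : (1 : ℝ) - (k:ℝ)/n = ((n:ℝ)-k)/n := by field_simp
  have h2 : (n:ℝ) * binH ((k:ℝ)/n)
      = (k:ℝ) * (-Real.log ((k:ℝ)/n)) + (((n-k : ℕ)):ℝ) * (-Real.log (((n:ℝ)-k)/n)) := by
    unfold binH
    rw [h1, Nat.cast_sub hk]
    field_simp
    ring
  rw [h2, Real.exp_add]
  have hp : 0 < (k:ℝ)/n ∨ k = 0 := by
    rcases Nat.eq_zero_or_pos k with h | h
    · exact Or.inr h
    · exact Or.inl (by positivity)
  have hq : 0 < ((n:ℝ)-(k:ℝ))/n ∨ n - k = 0 := by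
    rcases eq_or_lt_of_le hk' with h | h
    · have : k = n := by exact_mod_cast h
      exact Or.inr (by omega)
    · exact Or.inl (by apply div_pos <;> linarith)
  have e1 := aux_pow ((k:ℝ)/n) k hp
  have e2 := aux_pow (((n:ℝ)-(k:ℝ))/n) (n-k) hq
  calc Real.exp ((k:ℝ) * -Real.log ((k:ℝ)/n)) * Real.exp ((((n-k:ℕ)):ℝ) * -Real.log (((n:ℝ)-k)/n))
        * (((k:ℝ)/n)^k * (((n:ℝ)-(k:ℝ))/n)^(n-k))
      = (Real.exp ((k:ℝ) * -Real.log ((k:ℝ)/n)) * ((k:ℝ)/n)^k)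
        * (Real.exp ((((n-k:ℕ)):ℝ) * -Real.log (((n:ℝ)-k)/n)) * (((n:ℝ)-(k:ℝ))/n)^(n-k)) := by ring
    _ = 1 := by rw [e1, e2, one_mul]

lemma R_pos {n k : ℕ} (hn : 0 < n) (hk : k ≤ n) :
    0 < ((k:ℝ)/n)^k * (((n:ℝ)-(k:ℝ))/n)^(n-k) := by
  have hn' : (0:ℝ) < n := by exact_mod_cast hn
  have hk' : (k:ℝ) ≤ n := by exact_mod_cast hk
  have hp : 0 < ((k:ℝ)/n)^k := by
    rcases Nat.eq_zero_or_pos k with h | h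
    · rw [h, pow_zero]; norm_num
    · have : (0:ℝ) < k := by exact_mod_cast h
      positivity
  have hq : 0 < (((n:ℝ)-(k:ℝ))/n)^(n-k) := by
    rcases eq_or_lt_of_le hk' with h | h
    · have : n - k = 0 := by
        have : k = n := by exact_mod_cast h
        omega
      rw [this, pow_zero]; norm_num
    · have : 0 < ((n:ℝ)-(k:ℝ))/n := by apply div_pos <;> linarith
      positivity
  exact mul_pos hp hq

lemma choose_le_exp {n k : ℕ} (hn : 0 < n) (hk : k ≤ n) :
    (n.choose k : ℝ) ≤ Real.exp ((n:ℝ) * binH ((k:ℝ)/n)) := by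
  have hR := R_pos hn hk
  have h1 : tt n k k = (n.choose k : ℝ) * (((k:ℝ)/n)^k * (((n:ℝ)-(k:ℝ))/n)^(n-k)) := by
    unfold tt; ring
  have := tt_le_one hn hk
  rw [h1, ← exp_binH hn hk] at this
  exact le_of_mul_le_mul_right this hR

lemma exp_le_choose {n k : ℕ} (hn : 0 < n) (hk : k ≤ n) :
    Real.exp ((n:ℝ) * binH ((k:ℝ)/n)) ≤ ((n:ℝ)+1) * (n.choose k : ℝ) := by
  have hR := R_pos hn hk
  have h1 : tt n k k = (n.choose k : ℝ) * (((k:ℝ)/n)^k * (((n:ℝ)-(k:ℝ))/n)^(n-k)) := by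
    unfold tt; ring
  have h2 := one_le_tt hn hk
  rw [h1] at h2
  conv at h2 => lhs; rw [← exp_binH hn hk]
  have h3 : Real.exp ((n:ℝ) * binH ((k:ℝ)/n)) * (((k:ℝ)/n)^k * (((n:ℝ)-(k:ℝ))/n)^(n-k))
      ≤ (((n:ℝ)+1) * (n.choose k : ℝ)) * (((k:ℝ)/n)^k * (((n:ℝ)-(k:ℝ))/n)^(n-k)) := by
    calc Real.exp ((n:ℝ) * binH ((k:ℝ)/n)) * (((k:ℝ)/n)^k * (((n:ℝ)-(k:ℝ))/n)^(n-k))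
        ≤ ((n:ℝ)+1) * ((n.choose k : ℝ) * (((k:ℝ)/n)^k * (((n:ℝ)-(k:ℝ))/n)^(n-k))) := h2
      _ = (((n:ℝ)+1) * (n.choose k : ℝ)) * (((k:ℝ)/n)^k * (((n:ℝ)-(k:ℝ))/n)^(n-k)) := by ring
  exact le_of_mul_le_mul_right h3 hR


lemma binH_continuous : Continuous binH := by
  have : binH = fun t => Real.negMulLog t + Real.negMulLog (1 - t) := by
    funext t; simp only [binH, Real.negMulLog]; ring
  rw [this]
  exact Real.continuous_negMulLog.add
    (Real.continuous_negMulLog.comp (continuous_const.sub continuous_id))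

lemma hμhalf {n k : ℕ} (hn : 0 < n) : (1 + (2*(k:ℝ) - n)/n)/2 = (k:ℝ)/n := by
  have hn' : (n:ℝ) ≠ 0 := by positivity
  field_simp
  ring

lemma term_le (β h : ℝ) {n k : ℕ} (hn : 0 < n) (hk : k ≤ n) :
    (n.choose k : ℝ) * Real.exp (β / (2*(n:ℝ)) * (2*(k:ℝ)-n)^2 + h*(2*(k:ℝ)-n))
      ≤ Real.exp ((n:ℝ) * (h * ((2*(k:ℝ)-n)/n) + β/2 * ((2*(k:ℝ)-n)/n)^2
          + binH ((1 + (2*(k:ℝ)-n)/n)/2))) := by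
  have hn' : (n:ℝ) ≠ 0 := by positivity
  have hsplit : (n:ℝ) * (h * ((2*(k:ℝ)-n)/n) + β/2 * ((2*(k:ℝ)-n)/n)^2
        + binH ((1 + (2*(k:ℝ)-n)/n)/2))
      = (n:ℝ) * binH ((k:ℝ)/n) + (β / (2*(n:ℝ)) * (2*(k:ℝ)-n)^2 + h*(2*(k:ℝ)-n)) := by
    rw [hμhalf hn]; field_simp; ring
  rw [hsplit]
  conv_rhs => rw [Real.exp_add]
  exact mul_le_mul_of_nonneg_right (choose_le_exp hn hk) (le_of_lt (Real.exp_pos _))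

lemma term_ge (β h : ℝ) {n k : ℕ} (hn : 0 < n) (hk : k ≤ n) :
    Real.exp ((n:ℝ) * (h * ((2*(k:ℝ)-n)/n) + β/2 * ((2*(k:ℝ)-n)/n)^2
          + binH ((1 + (2*(k:ℝ)-n)/n)/2)))
      ≤ ((n:ℝ)+1) * ((n.choose k : ℝ) *
          Real.exp (β / (2*(n:ℝ)) * (2*(k:ℝ)-n)^2 + h*(2*(k:ℝ)-n))) := by
  have hn' : (n:ℝ) ≠ 0 := by positivity
  have hsplit : (n:ℝ) * (h * ((2*(k:ℝ)-n)/n) + β/2 * ((2*(k:ℝ)-n)/n)^2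
        + binH ((1 + (2*(k:ℝ)-n)/n)/2))
      = (n:ℝ) * binH ((k:ℝ)/n) + (β / (2*(n:ℝ)) * (2*(k:ℝ)-n)^2 + h*(2*(k:ℝ)-n)) := by
    rw [hμhalf hn]; field_simp; ring
  rw [hsplit]
  conv_lhs => rw [Real.exp_add]
  calc Real.exp ((n:ℝ) * binH ((k:ℝ)/n)) * Real.exp (β / (2*(n:ℝ)) * (2*(k:ℝ)-n)^2 + h*(2*(k:ℝ)-n))
      ≤ (((n:ℝ)+1) * (n.choose k : ℝ)) * Real.exp (β / (2*(n:ℝ)) * (2*(k:ℝ)-n)^2 + h*(2*(k:ℝ)-n)) :=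
        mul_le_mul_of_nonneg_right (exp_le_choose hn hk) (le_of_lt (Real.exp_pos _))
    _ = ((n:ℝ)+1) * ((n.choose k : ℝ) * Real.exp (β / (2*(n:ℝ)) * (2*(k:ℝ)-n)^2 + h*(2*(k:ℝ)-n))) := by
        ring

lemma log_succ_div_tendsto : Tendsto (fun n : ℕ => Real.log ((n:ℝ)+1) / n) atTop (nhds 0) := by
  have h1 : Tendsto (fun x : ℝ => Real.log x / x) atTop (nhds 0) :=
    Real.isLittleO_log_id_atTop.tendsto_div_nhds_zero
  have h2 : Tendsto (fun n : ℕ => (n:ℝ)+1) atTop atTop :=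
    tendsto_atTop_add_const_right _ 1 tendsto_natCast_atTop_atTop
  have h3 : Tendsto (fun n : ℕ => Real.log ((n:ℝ)+1) / ((n:ℝ)+1)) atTop (nhds 0) := h1.comp h2
  have h4 : Tendsto (fun n : ℕ => (1:ℝ) + 1/n) atTop (nhds 1) := by
    simpa using tendsto_const_nhds.add (tendsto_one_div_atTop_nhds_zero_nat (𝕜 := ℝ))
  have h5 := h3.mul h4
  rw [zero_mul] at h5
  apply h5.congr'
  filter_upwards [eventually_ge_atTop 1] with n hn
  have hn' : (n:ℝ) ≠ 0 := by
    have : (0:ℝ) < n := by exact_mod_cast hn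
    linarith
  field_simp


/-- For the Curie–Weiss model, the free entropy density converges:
`lim_{n→∞} (1/n) log Z_n(β,h) = max_{μ ∈ [-1,1]} { hμ + (β/2)μ² + H((1+μ)/2) }`. -/
theorem curie_weiss_free_entropy_density (β h : ℝ) (hβ : 0 < β) :
    Tendsto (fun n : ℕ => (1 / (n : ℝ)) * Real.log (cwZ β h n)) atTop
      (nhds (sSup ((fun μ : ℝ => h * μ + β / 2 * μ ^ 2 + binH ((1 + μ) / 2)) ''
        Set.Icc (-1 : ℝ) 1))) := by
  set f : ℝ → ℝ := fun μ => h * μ + β / 2 * μ ^ 2 + binH ((1 + μ) / 2) with hf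
  have hfc : Continuous f := by
    apply Continuous.add
    · exact (continuous_const.mul continuous_id).add (continuous_const.mul (continuous_pow 2))
    · exact binH_continuous.comp ((continuous_const.add continuous_id).div_const 2)
  obtain ⟨μs, hμs, hmax⟩ := isCompact_Icc.exists_isMaxOn
    (Set.nonempty_Icc.mpr (by norm_num) : (Set.Icc (-1:ℝ) 1).Nonempty) hfc.continuousOn
  have hSup : sSup (f '' Set.Icc (-1:ℝ) 1) = f μs :=
    IsGreatest.csSup_eq ⟨Set.mem_image_of_mem f hμs, by rintro y ⟨μ, hμ, rfl⟩; exact hmax hμ⟩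
  rw [hSup]
  obtain ⟨hμs1, hμs2⟩ := Set.mem_Icc.mp hμs
  -- the chosen k sequence
  set K : ℕ → ℕ := fun n => ⌊(n:ℝ) * ((1+μs)/2)⌋₊ with hK
  have hKle : ∀ n : ℕ, K n ≤ n := by
    intro n
    have h1 : (n:ℝ) * ((1+μs)/2) ≤ (n:ℝ) := by nlinarith [Nat.cast_nonneg (α := ℝ) n]
    calc K n ≤ ⌊(n:ℝ)⌋₊ := Nat.floor_le_floor h1
      _ = n := Nat.floor_natCast n
  set μn : ℕ → ℝ := fun n => (2*(K n:ℝ) - n)/n with hμn_def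
  have hμn : Tendsto μn atTop (nhds μs) := by
    have h2n : Tendsto (fun n : ℕ => 2/(n:ℝ)) atTop (nhds 0) :=
      Tendsto.div_atTop tendsto_const_nhds tendsto_natCast_atTop_atTop
    have hlo : Tendsto (fun n : ℕ => μs - 2/(n:ℝ)) atTop (nhds μs) := by
      have := (tendsto_const_nhds : Tendsto (fun _ : ℕ => μs) atTop (nhds μs)).sub h2n
      simpa using this
    apply tendsto_of_tendsto_of_tendsto_of_le_of_le' hlo tendsto_const_nhds
    · filter_upwards [eventually_ge_atTop 1] with n hn
      have hn' : (0:ℝ) < n := by exact_mod_cast hn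
      have hfl : (n:ℝ) * ((1+μs)/2) - 1 < (K n : ℝ) := Nat.sub_one_lt_floor _
      show μs - 2/(n:ℝ) ≤ (2*((K n):ℝ) - n)/n
      rw [le_div_iff₀ hn']
      have h22 : (2/(n:ℝ))*n = 2 := by field_simp
      nlinarith
    · filter_upwards [eventually_ge_atTop 1] with n hn
      have hn' : (0:ℝ) < n := by exact_mod_cast hn
      have hfl : (K n : ℝ) ≤ (n:ℝ) * ((1+μs)/2) :=
        Nat.floor_le (by nlinarith [Nat.cast_nonneg (α := ℝ) n])
      show (2*((K n):ℝ) - n)/n ≤ μs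
      rw [div_le_iff₀ hn']
      nlinarith
  -- lower and upper sequences
  have hl : Tendsto (fun n : ℕ => f (μn n) - Real.log ((n:ℝ)+1) / n) atTop (nhds (f μs)) := by
    have := ((hfc.tendsto μs).comp hμn).sub log_succ_div_tendsto
    simpa using this
  have hu : Tendsto (fun n : ℕ => f μs + Real.log ((n:ℝ)+1) / n) atTop (nhds (f μs)) := by
    have := (tendsto_const_nhds : Tendsto (fun _ : ℕ => f μs) atTop (nhds (f μs))).add log_succ_div_tendsto
    simpa using this
  apply tendsto_of_tendsto_of_tendsto_of_le_of_le' hl hu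
  · -- lower bound
    filter_upwards [eventually_ge_atTop 1] with n hn
    have hn0 : 0 < n := hn
    have hn' : (0:ℝ) < n := by exact_mod_cast hn
    have hZpos : 0 < cwZ β h n :=
      Finset.sum_pos (fun σ _ => Real.exp_pos _) Finset.univ_nonempty
    have hterm : Real.exp ((n:ℝ) * f (μn n))
        ≤ ((n:ℝ)+1) * cwZ β h n := by
      have h1 := term_ge β h hn0 (hKle n)
      have h2 : (n.choose (K n) : ℝ) *
          Real.exp (β / (2*(n:ℝ)) * (2*((K n):ℝ)-n)^2 + h*(2*((K n):ℝ)-n)) ≤ cwZ β h n := by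
        rw [cwZ_eq]
        exact Finset.single_le_sum
          (f := fun k => (n.choose k : ℝ) *
            Real.exp (β / (2*(n:ℝ)) * (2*(k:ℝ)-(n:ℝ))^2 + h*(2*(k:ℝ)-(n:ℝ))))
          (fun k _ => by positivity)
          (Finset.mem_range.mpr (Nat.lt_succ_of_le (hKle n)))
      calc Real.exp ((n:ℝ) * f (μn n)) ≤ ((n:ℝ)+1) * ((n.choose (K n) : ℝ) *
            Real.exp (β / (2*(n:ℝ)) * (2*((K n):ℝ)-n)^2 + h*(2*((K n):ℝ)-n))) := h1
        _ ≤ ((n:ℝ)+1) * cwZ β h n := by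
            apply mul_le_mul_of_nonneg_left h2; positivity
    have hlog := Real.log_le_log (Real.exp_pos _) hterm
    rw [Real.log_exp, Real.log_mul (by positivity) (ne_of_gt hZpos)] at hlog
    have h3 : (1/(n:ℝ)) * ((n:ℝ) * f (μn n) - Real.log ((n:ℝ)+1))
        ≤ (1/(n:ℝ)) * Real.log (cwZ β h n) := by
      apply mul_le_mul_of_nonneg_left _ (by positivity)
      linarith
    calc f (μn n) - Real.log ((n:ℝ)+1) / n
        = (1/(n:ℝ)) * ((n:ℝ) * f (μn n) - Real.log ((n:ℝ)+1)) := by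
          field_simp
      _ ≤ (1/(n:ℝ)) * Real.log (cwZ β h n) := h3
  · -- upper bound
    filter_upwards [eventually_ge_atTop 1] with n hn
    have hn0 : 0 < n := hn
    have hn' : (0:ℝ) < n := by exact_mod_cast hn
    have hZpos : 0 < cwZ β h n :=
      Finset.sum_pos (fun σ _ => Real.exp_pos _) Finset.univ_nonempty
    have hZU : cwZ β h n ≤ ((n:ℝ)+1) * Real.exp ((n:ℝ) * f μs) := by
      rw [cwZ_eq]
      calc ∑ k ∈ range (n+1), (n.choose k : ℝ) *
            Real.exp (β / (2*(n:ℝ)) * (2*(k:ℝ)-n)^2 + h*(2*(k:ℝ)-n))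
          ≤ ∑ k ∈ range (n+1), Real.exp ((n:ℝ) * f ((2*(k:ℝ)-n)/n)) := by
            apply Finset.sum_le_sum
            intro k hk
            exact term_le β h hn0 (Nat.lt_succ_iff.mp (Finset.mem_range.mp hk))
        _ ≤ ∑ k ∈ range (n+1), Real.exp ((n:ℝ) * f μs) := by
            apply Finset.sum_le_sum
            intro k hk
            have hk' : k ≤ n := Nat.lt_succ_iff.mp (Finset.mem_range.mp hk)
            have hkr : (k:ℝ) ≤ n := by exact_mod_cast hk'
            have hmem : (2*(k:ℝ)-n)/n ∈ Set.Icc (-1:ℝ) 1 := by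
              constructor
              · rw [le_div_iff₀ hn']; nlinarith [Nat.cast_nonneg (α := ℝ) k]
              · rw [div_le_one hn']; nlinarith
            exact Real.exp_le_exp.mpr (mul_le_mul_of_nonneg_left (hmax hmem) (le_of_lt hn'))
        _ = ((n:ℝ)+1) * Real.exp ((n:ℝ) * f μs) := by
            rw [Finset.sum_const, Finset.card_range, nsmul_eq_mul]
            push_cast; ring
    have hlog := Real.log_le_log hZpos hZU
    rw [Real.log_mul (by positivity) (ne_of_gt (Real.exp_pos _)), Real.log_exp] at hlog
    have h3 : (1/(n:ℝ)) * Real.log (cwZ β h n)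
        ≤ (1/(n:ℝ)) * (Real.log ((n:ℝ)+1) + (n:ℝ) * f μs) := by
      apply mul_le_mul_of_nonneg_left hlog (by positivity)
    calc (1/(n:ℝ)) * Real.log (cwZ β h n)
        ≤ (1/(n:ℝ)) * (Real.log ((n:ℝ)+1) + (n:ℝ) * f μs) := h3
      _ = f μs + Real.log ((n:ℝ)+1) / n := by field_simp; ring
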